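/- In misère Partizan Kayles, for all natural numbers k ≥ 1 and j ≥ 1, the position kS₁ + jS₂ has the same misère outcome as the abstract game {(k−1)S₁ + jS₂ | kS₁ + (j−1)S₂} in every Kayles context: after any Left move from kS₁ + jS₂ the resulting position is either (k−1)S₁ + jS₂ or (k+1)S₁ + (j−1)S₂, and modulo the Kayles universe the latter option is dominated by the former (i.e., (k−1)S₁ + jS₂ ≥ (k+1)S₁ + (j−1)S₂ modulo K), while Right's only move up to equivalence is to kS₁ + (j−1)S₂. -/
import Mathlib


/-- Add a strip of length `k` to a position (strips of length 0 are discarded). -/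
def addStrip (m : Multiset ℕ) (k : ℕ) : Multiset ℕ := if k = 0 then m else k ::ₘ m

/-- Left removes one square from a strip of length `n ≥ 1`, leaving strips `i` and `n-1-i`. -/
def LeftMove (G G' : Multiset ℕ) : Prop :=
  ∃ n ∈ G, ∃ i, i + 1 ≤ n ∧ G' = addStrip (addStrip (G.erase n) i) (n - 1 - i)

/-- Right removes two adjacent squares from a strip of length `n ≥ 2`, leaving `i` and `n-2-i`. -/
def RightMove (G G' : Multiset ℕ) : Prop :=
  ∃ n ∈ G, ∃ i, i + 2 ≤ n ∧ G' = addStrip (addStrip (G.erase n) i) (n - 2 - i)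

mutual
  /-- Misère play: Left, to move, wins (a player unable to move wins). -/
  inductive LeftWinsMover : Multiset ℕ → Prop
    | cannot (G : Multiset ℕ) : (¬ ∃ G', LeftMove G G') → LeftWinsMover G
    | move (G G' : Multiset ℕ) : LeftMove G G' → LeftWinsWaiter G' → LeftWinsMover G
  /-- Misère play: Left wins with Right to move. -/
  inductive LeftWinsWaiter : Multiset ℕ → Prop
    | intro (G : Multiset ℕ) : (∃ G', RightMove G G') →
        (∀ G', RightMove G G' → LeftWinsMover G') → LeftWinsWaiter G
end

inductive Outcome | L | N | P | R
  deriving DecidableEq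

open Classical in
/-- The misère outcome `o⁻(G)`. -/
noncomputable def outcome (G : Multiset ℕ) : Outcome :=
  if LeftWinsMover G then (if LeftWinsWaiter G then Outcome.L else Outcome.N)
  else (if LeftWinsWaiter G then Outcome.P else Outcome.R)

/-- The partial order on outcomes: `L` greatest, `R` least, `N` and `P` incomparable. -/
def Outcome.le (a b : Outcome) : Prop := a = b ∨ a = Outcome.R ∨ b = Outcome.L

/-- `pos k j` is the position `kS₁ + jS₂`. -/
def pos (k j : ℕ) : Multiset ℕ := Multiset.replicate k 1 + Multiset.replicate j 2


namespace KaylesAux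

/-- The key invariant value of a single strip. -/
def c (n : ℕ) : ℤ := if n % 3 = 1 then 1 else if n % 3 = 2 then -1 else 0

/-- The key invariant of a position. -/
def t (G : Multiset ℕ) : ℤ := (G.map c).sum

lemma c_eq0 {n : ℕ} (h : n % 3 = 0) : c n = 0 := by simp [c, h]
lemma c_eq1 {n : ℕ} (h : n % 3 = 1) : c n = 1 := by simp [c, h]
lemma c_eq2 {n : ℕ} (h : n % 3 = 2) : c n = -1 := by simp [c, h]

lemma c_cases (n : ℕ) :
    (n % 3 = 0 ∧ c n = 0) ∨ (n % 3 = 1 ∧ c n = 1) ∨ (n % 3 = 2 ∧ c n = -1) := by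
  have h : n % 3 = 0 ∨ n % 3 = 1 ∨ n % 3 = 2 := by omega
  rcases h with h | h | h
  · exact Or.inl ⟨h, c_eq0 h⟩
  · exact Or.inr (Or.inl ⟨h, c_eq1 h⟩)
  · exact Or.inr (Or.inr ⟨h, c_eq2 h⟩)

lemma t_cons (a : ℕ) (s : Multiset ℕ) : t (a ::ₘ s) = c a + t s := by
  simp [t]

lemma t_addStrip (m : Multiset ℕ) (k : ℕ) : t (addStrip m k) = t m + c k := by
  unfold addStrip
  split
  · subst ‹k = 0›; rw [c_eq0 (by omega)]; ring
  · rw [t_cons]; ring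

lemma sum_addStrip (m : Multiset ℕ) (k : ℕ) : (addStrip m k).sum = m.sum + k := by
  unfold addStrip
  split
  · subst ‹k = 0›; omega
  · simp; omega

lemma t_erase {n : ℕ} {G : Multiset ℕ} (hn : n ∈ G) : t G = c n + t (G.erase n) := by
  conv_lhs => rw [← Multiset.cons_erase hn]
  rw [t_cons]

lemma sum_erase {n : ℕ} {G : Multiset ℕ} (hn : n ∈ G) : G.sum = n + (G.erase n).sum := by
  conv_lhs => rw [← Multiset.cons_erase hn]
  simp

lemma deltaL (n i : ℕ) (hi : i + 1 ≤ n) :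
    c i + c (n - 1 - i) - c n = -1 ∨ c i + c (n - 1 - i) - c n = 2 := by
  rcases c_cases i with ⟨hi3, ei⟩ | ⟨hi3, ei⟩ | ⟨hi3, ei⟩ <;>
  rcases c_cases (n - 1 - i) with ⟨hm3, em⟩ | ⟨hm3, em⟩ | ⟨hm3, em⟩ <;>
  rcases c_cases n with ⟨hn3, en⟩ | ⟨hn3, en⟩ | ⟨hn3, en⟩ <;>
  rw [ei, em, en] <;> omega

lemma deltaR (n i : ℕ) (hi : i + 2 ≤ n) :
    c i + c (n - 2 - i) - c n = -2 ∨ c i + c (n - 2 - i) - c n = 1 := by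
  rcases c_cases i with ⟨hi3, ei⟩ | ⟨hi3, ei⟩ | ⟨hi3, ei⟩ <;>
  rcases c_cases (n - 2 - i) with ⟨hm3, em⟩ | ⟨hm3, em⟩ | ⟨hm3, em⟩ <;>
  rcases c_cases n with ⟨hn3, en⟩ | ⟨hn3, en⟩ | ⟨hn3, en⟩ <;>
  rw [ei, em, en] <;> omega

lemma witnessL {n : ℕ} (h1 : 1 ≤ n) (h2 : n ≠ 2) :
    ∃ i, i + 1 ≤ n ∧ c i + c (n - 1 - i) - c n = -1 := by
  rcases c_cases n with ⟨hn3, en⟩ | ⟨hn3, en⟩ | ⟨hn3, en⟩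
  · exact ⟨0, by omega, by rw [c_eq0 (by omega : (0:ℕ) % 3 = 0),
      c_eq2 (by omega : (n - 1 - 0) % 3 = 2), en]; norm_num⟩
  · exact ⟨0, by omega, by rw [c_eq0 (by omega : (0:ℕ) % 3 = 0),
      c_eq0 (by omega : (n - 1 - 0) % 3 = 0), en]; norm_num⟩
  · refine ⟨2, by omega, ?_⟩
    rw [c_eq2 (by omega : (2:ℕ) % 3 = 2), c_eq2 (by omega : (n - 1 - 2) % 3 = 2), en]
    norm_num

lemma witnessR {n : ℕ} (h1 : 2 ≤ n) :
    ∃ i, i + 2 ≤ n ∧ c i + c (n - 2 - i) - c n = 1 := by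
  rcases c_cases n with ⟨hn3, en⟩ | ⟨hn3, en⟩ | ⟨hn3, en⟩
  · exact ⟨0, by omega, by rw [c_eq0 (by omega : (0:ℕ) % 3 = 0),
      c_eq1 (by omega : (n - 2 - 0) % 3 = 1), en]; norm_num⟩
  · refine ⟨1, by omega, ?_⟩
    rw [c_eq1 (by omega : (1:ℕ) % 3 = 1), c_eq1 (by omega : (n - 2 - 1) % 3 = 1), en]
    norm_num
  · exact ⟨0, by omega, by rw [c_eq0 (by omega : (0:ℕ) % 3 = 0),
      c_eq0 (by omega : (n - 2 - 0) % 3 = 0), en]; norm_num⟩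

lemma t_nonpos {G : Multiset ℕ} (h : ∀ m ∈ G, m = 0 ∨ m = 2) : t G ≤ 0 := by
  induction G using Multiset.induction with
  | empty => simp [t]
  | cons a s ih =>
    rw [t_cons]
    have ha := h a (Multiset.mem_cons_self a s)
    have hs : t s ≤ 0 := ih (fun m hm => h m (Multiset.mem_cons_of_mem hm))
    rcases ha with rfl | rfl
    · rw [c_eq0 (by omega)]; omega
    · rw [c_eq2 (by omega)]; omega

lemma t_nonneg {G : Multiset ℕ} (h : ∀ m ∈ G, m ≤ 1) : 0 ≤ t G := by
  induction G using Multiset.induction with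
  | empty => simp [t]
  | cons a s ih =>
    rw [t_cons]
    have ha := h a (Multiset.mem_cons_self a s)
    have hs : 0 ≤ t s := ih (fun m hm => h m (Multiset.mem_cons_of_mem hm))
    interval_cases a
    · rw [c_eq0 (by omega)]; omega
    · rw [c_eq1 (by omega)]; omega

lemma t_all_zero {G : Multiset ℕ} (h : ∀ m ∈ G, m = 0) : t G = 0 := by
  induction G using Multiset.induction with
  | empty => simp [t]
  | cons a s ih =>
    rw [t_cons]
    have ha := h a (Multiset.mem_cons_self a s)
    have hs : t s = 0 := ih (fun m hm => h m (Multiset.mem_cons_of_mem hm))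
    subst ha
    rw [c_eq0 (by omega)]; omega

lemma char_trivial {G : Multiset ℕ} (h : ∀ m ∈ G, m = 0) :
    (LeftWinsMover G ↔ (t G ≤ 0 ∧ 3 ∣ t G)) ∧
      (LeftWinsWaiter G ↔ (t G ≤ 0 ∧ t G % 3 = 2)) := by
  have ht : t G = 0 := t_all_zero h
  have hnoL : ¬ ∃ G', LeftMove G G' := by
    rintro ⟨G', n, hn, i, hi, -⟩
    have := h n hn; omega
  have hnoR : ¬ ∃ G', RightMove G G' := by
    rintro ⟨G', n, hn, i, hi, -⟩
    have := h n hn; omega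
  constructor
  · constructor
    · intro _; rw [ht]; exact ⟨le_refl 0, ⟨0, by ring⟩⟩
    · intro _; exact LeftWinsMover.cannot G hnoL
  · constructor
    · intro hw
      cases hw with
      | intro _ hex _ => exact absurd hex hnoR
    · intro ⟨_, h2⟩; rw [ht] at h2; omega

lemma char : ∀ (N : ℕ) (G : Multiset ℕ), G.sum ≤ N →
    (LeftWinsMover G ↔ (t G ≤ 0 ∧ 3 ∣ t G)) ∧
      (LeftWinsWaiter G ↔ (t G ≤ 0 ∧ t G % 3 = 2)) := by
  intro N
  induction N with
  | zero =>
    intro G hG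
    exact char_trivial (fun m hm => by
      have := Multiset.single_le_sum (fun x _ => Nat.zero_le x) m hm
      omega)
  | succ N ih =>
    intro G hG
    by_cases hpos : ∃ n ∈ G, 1 ≤ n
    case neg =>
      exact char_trivial (fun m hm => by
        by_contra hne
        exact hpos ⟨m, hm, by omega⟩)
    case pos =>
    obtain ⟨n₀, hn₀, hn₀1⟩ := hpos
    -- facts about moves
    have hLmove : ∀ (n i : ℕ), n ∈ G → i + 1 ≤ n →
        t (addStrip (addStrip (G.erase n) i) (n - 1 - i))
          = t G + (c i + c (n - 1 - i) - c n) ∧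
        (addStrip (addStrip (G.erase n) i) (n - 1 - i)).sum ≤ N := by
      intro n i hn hi
      have h1 := t_erase hn
      have h2 := sum_erase hn
      have h3 := t_addStrip (G.erase n) i
      have h4 := t_addStrip (addStrip (G.erase n) i) (n - 1 - i)
      have h5 := sum_addStrip (G.erase n) i
      have h6 := sum_addStrip (addStrip (G.erase n) i) (n - 1 - i)
      constructor
      · rw [h4, h3]; omega
      · omega
    have hRmove : ∀ (n i : ℕ), n ∈ G → i + 2 ≤ n →
        t (addStrip (addStrip (G.erase n) i) (n - 2 - i))
          = t G + (c i + c (n - 2 - i) - c n) ∧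
        (addStrip (addStrip (G.erase n) i) (n - 2 - i)).sum ≤ N := by
      intro n i hn hi
      have h1 := t_erase hn
      have h2 := sum_erase hn
      have h3 := t_addStrip (G.erase n) i
      have h4 := t_addStrip (addStrip (G.erase n) i) (n - 2 - i)
      have h5 := sum_addStrip (G.erase n) i
      have h6 := sum_addStrip (addStrip (G.erase n) i) (n - 2 - i)
      constructor
      · rw [h4, h3]; omega
      · omega
    constructor
    · -- LeftWinsMover characterization
      constructor
      · intro h
        cases h with
        | cannot _ hno =>
          exact absurd ⟨_, n₀, hn₀, 0, by omega, rfl⟩ hno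
        | move _ G' hmv hW =>
          obtain ⟨n, hn, i, hi, rfl⟩ := hmv
          obtain ⟨ht', hs'⟩ := hLmove n i hn hi
          have hchar := ((ih _ hs').2).mp hW
          rw [ht'] at hchar
          rcases deltaL n i hi with hδ | hδ <;> omega
      · rintro ⟨h1, h2⟩
        by_cases hex : ∃ m ∈ G, 1 ≤ m ∧ m ≠ 2
        · obtain ⟨m, hm, hm1, hm2⟩ := hex
          obtain ⟨i, hi, hδ⟩ := witnessL hm1 hm2
          obtain ⟨ht', hs'⟩ := hLmove m i hm hi
          refine LeftWinsMover.move G _ ⟨m, hm, i, hi, rfl⟩ (((ih _ hs').2).mpr ?_)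
          rw [ht']; omega
        · -- every positive strip is a 2; in particular n₀ = 2
          have hall : ∀ m ∈ G, m = 0 ∨ m = 2 := by
            intro m hm
            by_contra hc
            push_neg at hc
            exact hex ⟨m, hm, by omega, by omega⟩
          have hn₀2 : n₀ = 2 := by rcases hall n₀ hn₀ with h | h <;> omega
          subst hn₀2
          have htle : t G ≤ -1 := by
            have h1 := t_erase hn₀
            have h2 : t (G.erase 2) ≤ 0 :=
              t_nonpos (fun m hm => hall m (Multiset.mem_of_mem_erase hm))
            rw [c_eq2 (by omega : (2:ℕ) % 3 = 2)] at h1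
            omega
          obtain ⟨ht', hs'⟩ := hLmove 2 0 hn₀ (by omega)
          refine LeftWinsMover.move G _ ⟨2, hn₀, 0, by omega, rfl⟩ (((ih _ hs').2).mpr ?_)
          rw [ht', c_eq0 (by omega : (0:ℕ) % 3 = 0),
            c_eq1 (by omega : (2 - 1 - 0) % 3 = 1), c_eq2 (by omega : (2:ℕ) % 3 = 2)]
          omega
    · -- LeftWinsWaiter characterization
      constructor
      · intro h
        cases h with
        | intro _ hex hall =>
          obtain ⟨G₀, n, hn, i0, hi0, -⟩ := hex
          obtain ⟨i, hi, hδ⟩ := witnessR (show 2 ≤ n by omega)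
          obtain ⟨ht', hs'⟩ := hRmove n i hn hi
          have hM := hall _ ⟨n, hn, i, hi, rfl⟩
          have hchar := ((ih _ hs').1).mp hM
          rw [ht', hδ] at hchar
          omega
      · rintro ⟨h1, h2⟩
        have hstrip : ∃ n ∈ G, 2 ≤ n := by
          by_contra hc
          push_neg at hc
          have := t_nonneg (fun m hm => by have := hc m hm; omega)
          omega
        obtain ⟨n, hn, hn2⟩ := hstrip
        refine LeftWinsWaiter.intro G ⟨_, n, hn, 0, by omega, rfl⟩ ?_
        rintro G' ⟨m, hm, i, hi, rfl⟩
        obtain ⟨ht', hs'⟩ := hRmove m i hm hi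
        refine ((ih _ hs').1).mpr ?_
        rw [ht']
        rcases deltaR m i hi with hδ | hδ <;> omega

lemma charG (G : Multiset ℕ) :
    (LeftWinsMover G ↔ (t G ≤ 0 ∧ 3 ∣ t G)) ∧
      (LeftWinsWaiter G ↔ (t G ≤ 0 ∧ t G % 3 = 2)) :=
  char G.sum G (le_refl _)

open Classical in
lemma outcome_eq (G : Multiset ℕ) :
    outcome G = if t G ≤ 0 ∧ 3 ∣ t G then Outcome.N
      else if t G ≤ 0 ∧ t G % 3 = 2 then Outcome.P else Outcome.R := by
  have h1 := (charG G).1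
  have h2 := (charG G).2
  unfold outcome
  by_cases hM : t G ≤ 0 ∧ 3 ∣ t G <;> by_cases hW : t G ≤ 0 ∧ t G % 3 = 2
  · exfalso
    have h3 := hM.2
    have h4 := hW.2
    omega
  · rw [if_pos (h1.mpr hM), if_neg (fun hw => hW (h2.mp hw)), if_pos hM]
  · rw [if_neg (fun hm => hM (h1.mp hm)), if_pos (h2.mpr hW), if_neg hM, if_pos hW]
  · rw [if_neg (fun hm => hM (h1.mp hm)), if_neg (fun hw => hW (h2.mp hw)),
      if_neg hM, if_neg hW]

lemma t_add (A B : Multiset ℕ) : t (A + B) = t A + t B := by simp [t]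

lemma t_pos (a b : ℕ) : t (pos a b) = (a : ℤ) - (b : ℤ) := by
  have h1 : c 1 = 1 := c_eq1 (by omega)
  have h2 : c 2 = -1 := c_eq2 (by omega)
  simp [pos, t, Multiset.map_replicate, h1, h2]
  ring

lemma pos_cons_one (k j : ℕ) : pos (k + 1) j = 1 ::ₘ pos k j := by
  simp [pos, Multiset.replicate_succ, Multiset.cons_add]

lemma pos_cons_two (k j : ℕ) : pos k (j + 1) = 2 ::ₘ pos k j := by
  simp only [pos, Multiset.replicate_succ]
  rw [Multiset.add_cons]

end KaylesAux

theorem kayles_options_of_ones_twos (k j : ℕ) (hk : 1 ≤ k) (hj : 1 ≤ j) :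
    (∀ G' : Multiset ℕ, LeftMove (pos k j) G' →
      G' = pos (k - 1) j ∨ G' = pos (k + 1) (j - 1)) ∧
    (∀ X : Multiset ℕ, 0 ∉ X →
      Outcome.le (outcome (pos (k + 1) (j - 1) + X)) (outcome (pos (k - 1) j + X))) ∧
    (∀ G' : Multiset ℕ, RightMove (pos k j) G' → G' = pos k (j - 1)) := by
  classical
  open KaylesAux in
  obtain ⟨k, rfl⟩ : ∃ k', k = k' + 1 := ⟨k - 1, by omega⟩
  obtain ⟨j, rfl⟩ : ∃ j', j = j' + 1 := ⟨j - 1, by omega⟩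
  simp only [Nat.add_sub_cancel]
  have hmem : ∀ n ∈ pos (k + 1) (j + 1), n = 1 ∨ n = 2 := by
    intro n hn
    simp [pos, Multiset.mem_replicate] at hn
    rcases hn with ⟨-, h⟩ | ⟨-, h⟩ <;> omega
  have he1 : (pos (k + 1) (j + 1)).erase 1 = pos k (j + 1) := by
    rw [KaylesAux.pos_cons_one, Multiset.erase_cons_head]
  have he2 : (pos (k + 1) (j + 1)).erase 2 = pos (k + 1) j := by
    rw [KaylesAux.pos_cons_two, Multiset.erase_cons_head]
  refine ⟨?_, ?_, ?_⟩
  · rintro G' ⟨n, hn, i, hi, rfl⟩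
    rcases hmem n hn with rfl | rfl
    · left
      have hi0 : i = 0 := by omega
      subst hi0
      simp [addStrip, he1]
    · right
      have hi01 : i = 0 ∨ i = 1 := by omega
      rcases hi01 with rfl | rfl
      · rw [show (2:ℕ) - 1 - 0 = 1 from rfl, he2]
        simp [addStrip, KaylesAux.pos_cons_one]
      · rw [show (2:ℕ) - 1 - 1 = 0 from rfl, he2]
        simp [addStrip, KaylesAux.pos_cons_one]
  · intro X _
    rw [KaylesAux.outcome_eq, KaylesAux.outcome_eq, KaylesAux.t_add, KaylesAux.t_add,
      KaylesAux.t_pos, KaylesAux.t_pos]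
    have key : ((k + 1 + 1 : ℕ) : ℤ) - ((j : ℕ) : ℤ) + KaylesAux.t X
        = ((k : ℕ) : ℤ) - ((j + 1 : ℕ) : ℤ) + KaylesAux.t X + 3 := by push_cast; ring
    rw [key]
    set s := ((k : ℕ) : ℤ) - ((j + 1 : ℕ) : ℤ) + KaylesAux.t X with hs
    split_ifs <;>
      first
        | exact Or.inl rfl
        | exact Or.inr (Or.inl rfl)
        | exact Or.inr (Or.inr rfl)
        | omega
  · rintro G' ⟨n, hn, i, hi, rfl⟩
    rcases hmem n hn with rfl | rfl
    · omega
    · have hi0 : i = 0 := by omega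
      subst hi0
      simp [addStrip, he2]
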